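/- (Stationarity of the ALS/Newton update) If the local Hessian matrix H with entries H(β,γ) = (1/N^{d−1}) ∑_{i : i(c) = j} (∏_{s ≠ c} Q(s)(β)(i(s))) · (∏_{s ≠ c} Q(s)(γ)(i(s))) is invertible, then the vector v* = H⁻¹ φ, where φ(γ) = (1/N^{d−1}) ∑_{i : i(c) = j} (∏_{s ≠ c} Q(s)(γ)(i(s))) · T(i), is a stationary point of the restricted local discrepancy: for every α ∈ Fin r, the derivative at t = 0 of t ↦ ε_{c,j}(Q[c,j := v* + t·e_α]) is zero. -/

import Mathlib

open Finset

/-- Canonical-decomposition approximation: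
`F(Q)(i) = ∑ α, ∏ s, Q s α (i s)`. -/
noncomputable def capF (d N r : ℕ) (Q : Fin d → Fin r → Fin N → ℝ)
    (i : Fin d → Fin N) : ℝ :=
  ∑ α : Fin r, ∏ s : Fin d, Q s α (i s)

/-- Residual `R(Q)(i) = F(Q)(i) - T(i)`. -/
noncomputable def resid (d N r : ℕ) (T : (Fin d → Fin N) → ℝ)
    (Q : Fin d → Fin r → Fin N → ℝ) (i : Fin d → Fin N) : ℝ :=
  capF d N r Q i - T i

/-- Global discrepancy `ε_Σ(Q) = (1/(2 N^d)) ∑ i, R(Q)(i)^2`. -/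
noncomputable def epsGlobal (d N r : ℕ) (T : (Fin d → Fin N) → ℝ)
    (Q : Fin d → Fin r → Fin N → ℝ) : ℝ :=
  (1 / (2 * (N : ℝ) ^ d)) * ∑ i : Fin d → Fin N, (resid d N r T Q i) ^ 2

/-- Local discrepancy on the hyperplane `i c = j`:
`ε_{c,j}(Q) = (1/(2 N^(d-1))) ∑_{i : i c = j} R(Q)(i)^2`. -/
noncomputable def epsLocal (d N r : ℕ) (T : (Fin d → Fin N) → ℝ)
    (Q : Fin d → Fin r → Fin N → ℝ) (c : Fin d) (j : Fin N) : ℝ :=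
  (1 / (2 * (N : ℝ) ^ (d - 1))) *
    ∑ i ∈ Finset.univ.filter (fun i : Fin d → Fin N => i c = j),
      (resid d N r T Q i) ^ 2

/-- `Q[c,j := v]`: replace the core vector of direction `c` at node `j` by `v`. -/
def updVec (d N r : ℕ) (Q : Fin d → Fin r → Fin N → ℝ) (c : Fin d) (j : Fin N)
    (v : Fin r → ℝ) : Fin d → Fin r → Fin N → ℝ :=
  fun s α k => if s = c ∧ k = j then v α else Q s α k

/-- `Q` with the single entry `Q c α j` replaced by `Q c α j + t`. -/
def updOne (d N r : ℕ) (Q : Fin d → Fin r → Fin N → ℝ) (c : Fin d) (α : Fin r)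
    (j : Fin N) (t : ℝ) : Fin d → Fin r → Fin N → ℝ :=
  fun s β k => if s = c ∧ β = α ∧ k = j then Q c α j + t else Q s β k
theorem als_newton_update_stationary (d N r : ℕ) (hd : 0 < d) (hN : 0 < N)
    (hr : 0 < r) (T : (Fin d → Fin N) → ℝ) (Q : Fin d → Fin r → Fin N → ℝ)
    (c : Fin d) (j : Fin N) (H : Matrix (Fin r) (Fin r) ℝ) (φ : Fin r → ℝ)
    (hH : ∀ β γ : Fin r, H β γ =
      (1 / (N : ℝ) ^ (d - 1)) *
        ∑ i ∈ Finset.univ.filter (fun i : Fin d → Fin N => i c = j),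
          (∏ s ∈ Finset.univ.erase c, Q s β (i s)) *
            (∏ s ∈ Finset.univ.erase c, Q s γ (i s)))
    (hφ : ∀ γ : Fin r, φ γ =
      (1 / (N : ℝ) ^ (d - 1)) *
        ∑ i ∈ Finset.univ.filter (fun i : Fin d → Fin N => i c = j),
          (∏ s ∈ Finset.univ.erase c, Q s γ (i s)) * T i)
    (hinv : IsUnit H) :
    ∀ α : Fin r,
      HasDerivAt
        (fun t : ℝ =>
          epsLocal d N r T
            (updVec d N r Q c j (H⁻¹.mulVec φ + t • (Pi.single α 1 : Fin r → ℝ))) c j)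
        0 0 := by
  intro α
  classical
  set v : Fin r → ℝ := H⁻¹.mulVec φ with hv
  set S := Finset.univ.filter (fun i : Fin d → Fin N => i c = j) with hS
  set P : Fin r → (Fin d → Fin N) → ℝ :=
    fun β i => ∏ s ∈ Finset.univ.erase c, Q s β (i s) with hP
  set A : (Fin d → Fin N) → ℝ := fun i => (∑ β, v β * P β i) - T i with hA
  have hfun : ∀ t : ℝ,
      epsLocal d N r T (updVec d N r Q c j (v + t • (Pi.single α 1 : Fin r → ℝ))) c j
        = (1 / (2 * (N : ℝ) ^ (d - 1))) * ∑ i ∈ S, (A i + t * P α i) ^ 2 := by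
    intro t
    unfold epsLocal
    rw [← hS]
    congr 1
    apply Finset.sum_congr rfl
    intro i hi
    have hic : i c = j := by simpa [hS] using (Finset.mem_filter.mp hi).2
    have hres : resid d N r T (updVec d N r Q c j (v + t • (Pi.single α 1 : Fin r → ℝ))) i
        = A i + t * P α i := by
      unfold resid capF updVec
      have hprod : ∀ β : Fin r,
          ∏ s : Fin d,
              (if s = c ∧ i s = j then (v + t • (Pi.single α 1 : Fin r → ℝ)) β else Q s β (i s))
            = (v β + t * ((Pi.single α 1 : Fin r → ℝ) β)) * P β i := by
        intro β
        rw [← Finset.mul_prod_erase Finset.univ _ (Finset.mem_univ c)]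
        congr 1
        · simp [hic]
        · apply Finset.prod_congr rfl
          intro s hs
          have hsne : s ≠ c := (Finset.mem_erase.mp hs).1
          simp [hsne]
      simp only [hprod]
      have hterm : ∀ β, (v β + t * ((Pi.single α 1 : Fin r → ℝ) β)) * P β i
          = v β * P β i + t * (((Pi.single α 1 : Fin r → ℝ) β) * P β i) := by intro β; ring
      simp only [hterm, Finset.sum_add_distrib, ← Finset.mul_sum]
      have hsingle : ∑ β : Fin r, ((Pi.single α 1 : Fin r → ℝ) β) * P β i = P α i := by
        rw [Finset.sum_eq_single α]
        · simp
        · intro b _ hb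
          simp [Pi.single_apply, hb]
        · simp
      rw [hsingle, hA]
      ring
    rw [hres]
  have hderiv : HasDerivAt
      (fun t : ℝ => (1 / (2 * (N : ℝ) ^ (d - 1))) * ∑ i ∈ S, (A i + t * P α i) ^ 2)
      ((1 / (2 * (N : ℝ) ^ (d - 1))) * ∑ i ∈ S, 2 * A i * P α i) 0 := by
    apply HasDerivAt.const_mul
    have h := HasDerivAt.fun_sum (fun i (_ : i ∈ S) =>
      (((hasDerivAt_id (0:ℝ)).mul_const (P α i)).const_add (A i)).pow 2)
    convert h using 1
    · rfl
    · rfl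
    apply Finset.sum_congr rfl
    intro i _
    simp
  have hNd : ((N : ℝ) ^ (d - 1)) ≠ 0 := by positivity
  have hPP : ∀ β : Fin r, ∑ i ∈ S, P β i * P α i = (N : ℝ) ^ (d - 1) * H α β := by
    intro β
    rw [hH α β, ← mul_assoc, mul_one_div, div_self hNd, one_mul]
    exact Finset.sum_congr rfl (fun i _ => mul_comm (P β i) (P α i))
  have hTP : ∑ i ∈ S, P α i * T i = (N : ℝ) ^ (d - 1) * φ α := by
    rw [hφ α, ← mul_assoc, mul_one_div, div_self hNd, one_mul]
  have hsum0 : ∑ i ∈ S, 2 * A i * P α i = 0 := by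
    have step1 : ∑ i ∈ S, 2 * A i * P α i
        = (∑ i ∈ S, ∑ β, 2 * (v β * (P β i * P α i))) - ∑ i ∈ S, 2 * (P α i * T i) := by
      rw [← Finset.sum_sub_distrib]
      apply Finset.sum_congr rfl
      intro i _
      have hβ : (2:ℝ) * (∑ β, v β * P β i) * P α i
          = ∑ β, 2 * (v β * (P β i * P α i)) := by
        rw [mul_assoc, Finset.sum_mul, Finset.mul_sum]
        simp only [mul_assoc]
      rw [hA]
      dsimp only
      rw [mul_sub, sub_mul, hβ]
      ring
    have step2 : ∑ i ∈ S, ∑ β, 2 * (v β * (P β i * P α i))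
        = ∑ β, 2 * (v β * ((N : ℝ) ^ (d - 1) * H α β)) := by
      rw [Finset.sum_comm]
      apply Finset.sum_congr rfl
      intro β _
      rw [← hPP β, Finset.mul_sum, Finset.mul_sum]
    have step3 : ∑ i ∈ S, 2 * (P α i * T i) = 2 * ((N : ℝ) ^ (d - 1) * φ α) := by
      rw [← hTP, Finset.mul_sum]
    rw [step1, step2, step3]
    have hmv : H.mulVec v = φ := by
      rw [hv, Matrix.mulVec_mulVec,
        Matrix.mul_nonsing_inv H ((Matrix.isUnit_iff_isUnit_det H).mp hinv),
        Matrix.one_mulVec]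
    have hfin : ∑ β, 2 * (v β * ((N : ℝ) ^ (d - 1) * H α β))
        = 2 * ((N : ℝ) ^ (d - 1) * (H.mulVec v) α) := by
      rw [Matrix.mulVec, dotProduct, Finset.mul_sum, Finset.mul_sum]
      apply Finset.sum_congr rfl
      intro β _
      ring
    rw [hfin, hmv]
    ring
  have hd' := hderiv
  rw [hsum0, mul_zero] at hd'
  exact (funext hfun : _) ▸ hd'
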